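/- If the Laplacian L of a strongly connected directed graph has left null vector r with all positive entries (r^T L = 0), and R = diag(r), then the matrix L̂ = R·L + L^T·R is symmetric, has all row sums zero, has nonpositive off-diagonal entries, and is positive semidefinite; i.e., L̂ is the Laplacian of an undirected connected graph. -/

import Mathlib

open Matrix

lemma quad_nonneg (n : ℕ) (M : Matrix (Fin n) (Fin n) ℝ)
    (hsym : ∀ i j, M j i = M i j)
    (hrow : ∀ i, ∑ j, M i j = 0)
    (hoff : ∀ i j, i ≠ j → M i j ≤ 0)
    (x : Fin n → ℝ) : 0 ≤ x ⬝ᵥ M *ᵥ x := by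
  have h1 : ∑ i, ∑ j, M i j * (x i)^2 = 0 := by
    refine Finset.sum_eq_zero fun i _ => ?_
    rw [← Finset.sum_mul, hrow, zero_mul]
  have h2 : ∑ i, ∑ j, M i j * (x j)^2 = 0 := by
    rw [Finset.sum_comm]
    refine Finset.sum_eq_zero fun j _ => ?_
    rw [← Finset.sum_mul, show (∑ i, M i j) = 0 from
      (Finset.sum_congr rfl fun i _ => (hsym i j).symm).trans (hrow j), zero_mul]
  have hq : x ⬝ᵥ M *ᵥ x = ∑ i, ∑ j, M i j * x i * x j := by
    simp only [dotProduct, mulVec, Finset.mul_sum]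
    exact Finset.sum_congr rfl fun i _ => Finset.sum_congr rfl fun j _ => by ring
  have hnn : 0 ≤ ∑ i, ∑ j, -(M i j * (x i - x j)^2) := by
    refine Finset.sum_nonneg fun i _ => Finset.sum_nonneg fun j _ => ?_
    by_cases h : i = j
    · simp [h]
    · have := hoff i j h
      nlinarith [sq_nonneg (x i - x j)]
  have hexp : ∑ i, ∑ j, -(M i j * (x i - x j)^2)
      = 2 * (∑ i, ∑ j, M i j * x i * x j) - (∑ i, ∑ j, M i j * (x i)^2)
        - (∑ i, ∑ j, M i j * (x j)^2) := by
    simp_rw [Finset.mul_sum, ← Finset.sum_sub_distrib]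
    exact Finset.sum_congr rfl fun i _ => Finset.sum_congr rfl fun j _ => by ring
  rw [hq]
  rw [hexp, h1, h2] at hnn
  linarith

theorem hat_laplacian_properties (N : ℕ) (hN : 0 < N)
    (a : Matrix (Fin N) (Fin N) ℝ)
    (hdiag : ∀ i, a i i = 0) (h01 : ∀ i j, a i j = 0 ∨ a i j = 1)
    (hsc : ∀ i j : Fin N, Relation.ReflTransGen (fun u v => a v u ≠ 0) i j)
    (L : Matrix (Fin N) (Fin N) ℝ)
    (hL : L = fun i j => if i = j then ∑ k, a i k else -a i j)
    (r : Fin N → ℝ) (hr : ∀ i, 0 < r i) (hrL : r ᵥ* L = 0) :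
    let Lhat := Matrix.diagonal r * L + Lᵀ * Matrix.diagonal r
    Lhat.IsSymm ∧ Lhat *ᵥ (fun _ => (1 : ℝ)) = 0 ∧
      (∀ i j, i ≠ j → Lhat i j ≤ 0) ∧ Lhat.PosSemidef := by
  intro Lhat
  have ha : ∀ i j, 0 ≤ a i j := fun i j => by rcases h01 i j with h | h <;> simp [h]
  have happ : ∀ i j, Lhat i j = r i * L i j + L j i * r j := by
    intro i j
    simp [Lhat, Matrix.add_apply, Matrix.mul_apply, Matrix.diagonal, Matrix.transpose_apply,
      Finset.sum_ite_eq, Finset.sum_ite_eq']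
  have hsym : ∀ i j, Lhat j i = Lhat i j := by
    intro i j; rw [happ, happ]; ring
  have hLrow : ∀ i, ∑ j, L i j = 0 := by
    intro i
    have : ∀ j, L i j = (if i = j then (∑ k, a i k) + a i j else 0) - a i j := by
      intro j
      rw [hL]
      by_cases h : i = j
      · subst h; simp [hdiag]
      · simp [h]
    simp_rw [this, Finset.sum_sub_distrib, Finset.sum_ite_eq, Finset.mem_univ, if_true,
      hdiag]
    ring
  have hcol : ∀ j, ∑ i, L i j * r i = 0 := by
    intro j
    have := congrFun hrL j
    simp only [vecMul, dotProduct, Pi.zero_apply] at this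
    rw [← this]
    exact Finset.sum_congr rfl fun i _ => mul_comm _ _
  have hrowhat : ∀ i, ∑ j, Lhat i j = 0 := by
    intro i
    simp_rw [happ, Finset.sum_add_distrib, ← Finset.mul_sum, hLrow, mul_zero, hcol, zero_add]
  have hoff : ∀ i j, i ≠ j → Lhat i j ≤ 0 := by
    intro i j h
    rw [happ, hL]
    simp only [h, Ne.symm h, if_false]
    have := (hr i).le; have := (hr j).le
    have := ha i j; have := ha j i
    nlinarith
  refine ⟨?_, ?_, hoff, ?_⟩
  · ext i j
    rw [Matrix.transpose_apply]; exact hsym i j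
  · funext i
    simp only [mulVec, dotProduct, mul_one, Pi.zero_apply]
    exact hrowhat i
  · rw [Matrix.posSemidef_iff_dotProduct_mulVec]
    constructor
    · ext i j
      simp only [Matrix.conjTranspose_apply, RCLike.star_def, starRingEnd_apply, star_trivial]
      exact hsym i j
    · intro x
      simpa using quad_nonneg N Lhat hsym hrowhat hoff x
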